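/- Jacobi's bilinear determinant identity (Desnanot–Jacobi / Dodgson condensation): for an n×n matrix A over a commutative ring with determinant D, let D[j;k] denote the minor deleting row j and column k, and D[j₁,j₂;k₁,k₂] the minor deleting rows j₁,j₂ and columns k₁,k₂. Then D[n−1;n−1]·D[n;n] − D[n−1;n]·D[n;n−1] = D[n−1,n;n−1,n]·D. -/

import Mathlib

open Matrix

section JacobiAux

variable {R : Type*} [CommRing R]

private lemma jac_mul_updateCol {m : Type*} [Fintype m] [DecidableEq m]
    (M N : Matrix m m R) (j : m) (c : m → R) :
    M * (N.updateCol j c) = (M * N).updateCol j (M.mulVec c) := by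
  ext i k
  by_cases h : k = j <;>
    simp [Matrix.mul_apply, Matrix.updateCol_apply, h, Matrix.mulVec, dotProduct]

private lemma jac_key (n : ℕ) (A : Matrix (Fin (n + 2)) (Fin (n + 2)) R) :
    A.det * ((A.submatrix (Fin.succAbove ⟨n, by linarith⟩) (Fin.succAbove ⟨n, by linarith⟩)).det *
        (A.submatrix Fin.castSucc Fin.castSucc).det -
      (A.submatrix (Fin.succAbove ⟨n, by linarith⟩) Fin.castSucc).det *
        (A.submatrix Fin.castSucc (Fin.succAbove ⟨n, by linarith⟩)).det) =
    A.det * ((A.submatrix (fun i : Fin n => i.castSucc.castSucc)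
          (fun i : Fin n => i.castSucc.castSucc)).det * A.det) := by
  set p : Fin (n + 2) := ⟨n, by omega⟩ with hp
  set q : Fin (n + 2) := Fin.last (n + 1) with hq
  set B := adjugate A with hB
  set e : Fin n ⊕ Fin 2 ≃ Fin (n + 2) := finSumFinEquiv with he
  have heq : q.succAbove = Fin.castSucc := Fin.succAbove_last
  -- express statement minors through adjugate entries
  have hpq : p ≠ q := by
    rw [hp, hq]
    simp [Fin.ext_iff, Fin.last]
  have hev : ((-1 : R)) ^ ((p : ℕ) + (p : ℕ)) = 1 :=
    Even.neg_one_pow ⟨(p : ℕ), rfl⟩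
  have hev' : ((-1 : R)) ^ ((q : ℕ) + (q : ℕ)) = 1 :=
    Even.neg_one_pow ⟨(q : ℕ), rfl⟩
  have hod : ((-1 : R)) ^ ((p : ℕ) + (q : ℕ)) = -1 :=
    Odd.neg_one_pow ⟨n, by show n + (n + 1) = 2 * n + 1; ring⟩
  have hod' : ((-1 : R)) ^ ((q : ℕ) + (p : ℕ)) = -1 :=
    Odd.neg_one_pow ⟨n, by show (n + 1) + n = 2 * n + 1; ring⟩
  have hBpp : B p p = (A.submatrix p.succAbove p.succAbove).det := by
    rw [hB, adjugate_fin_succ_eq_det_submatrix, hev, one_mul]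
  have hBqq : B q q = (A.submatrix Fin.castSucc Fin.castSucc).det := by
    rw [hB, adjugate_fin_succ_eq_det_submatrix, hev', heq, one_mul]
  have hBqp : B q p = -(A.submatrix p.succAbove Fin.castSucc).det := by
    rw [hB, adjugate_fin_succ_eq_det_submatrix, hod, heq, neg_one_mul]
  have hBpq : B p q = -(A.submatrix Fin.castSucc p.succAbove).det := by
    rw [hB, adjugate_fin_succ_eq_det_submatrix, hod', heq, neg_one_mul]
  have hli : (fun i : Fin n => e (Sum.inl i)) = (fun i : Fin n => i.castSucc.castSucc) := by
    funext i
    simp [he, Fin.ext_iff]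
  rw [← hBpp, ← hBqq]
  have h34 : (A.submatrix p.succAbove Fin.castSucc).det *
      (A.submatrix Fin.castSucc p.succAbove).det = B p q * B q p := by
    rw [hBpq, hBqp]; ring
  rw [h34, ← hli]
  -- the core computation
  have herp : e (Sum.inr 0) = p := by simp [he, hp, Fin.ext_iff]
  have herq : e (Sum.inr 1) = q := by simp [he, hq, Fin.ext_iff, Fin.last]
  set Q : Matrix (Fin (n + 2)) (Fin (n + 2)) R :=
    ((1 : Matrix (Fin (n + 2)) (Fin (n + 2)) R).updateCol p (fun i => B i p)).updateCol
      q (fun i => B i q) with hQ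
  have her : ∀ j : Fin 2, e (Sum.inr j) = p ∨ e (Sum.inr j) = q := by
    intro j
    fin_cases j
    exacts [Or.inl herp, Or.inr herq]
  have hQcol : ∀ (i : Fin (n + 2)) (x : Fin (n + 2)), (x = p ∨ x = q) → Q i x = B i x := by
    rintro i x (rfl | rfl)
    · rw [hQ, Matrix.updateCol_ne hpq, Matrix.updateCol_self]
    · rw [hQ, Matrix.updateCol_self]
  have hQsub : Q.submatrix e e =
      Matrix.fromBlocks 1 (B.submatrix (fun i => e (Sum.inl i)) (fun j => e (Sum.inr j))) 0
        (B.submatrix (fun i => e (Sum.inr i)) (fun j => e (Sum.inr j))) := by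
    ext i j
    rcases i with i | i <;> rcases j with j | j <;>
      simp only [Matrix.submatrix_apply, Matrix.fromBlocks_apply₁₁, Matrix.fromBlocks_apply₁₂,
        Matrix.fromBlocks_apply₂₁, Matrix.fromBlocks_apply₂₂, Matrix.zero_apply]
    · have h1 : e (Sum.inl j) ≠ q := by simp [he, hq, Fin.ext_iff, Fin.last]; omega
      have h2 : e (Sum.inl j) ≠ p := by simp [he, hp, Fin.ext_iff]; omega
      rw [hQ, Matrix.updateCol_ne h1, Matrix.updateCol_ne h2]
      simp [Matrix.one_apply, he, Fin.ext_iff]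
    · exact hQcol _ _ (her j)
    · have h1 : e (Sum.inl j) ≠ q := by simp [he, hq, Fin.ext_iff, Fin.last]; omega
      have h2 : e (Sum.inl j) ≠ p := by simp [he, hp, Fin.ext_iff]; omega
      rw [hQ, Matrix.updateCol_ne h1, Matrix.updateCol_ne h2]
      simp [Matrix.one_apply, he, Fin.ext_iff]; omega
    · exact hQcol _ _ (her j)
  have hdetQ : Q.det = B p p * B q q - B p q * B q p := by
    rw [← Matrix.det_submatrix_equiv_self e, hQsub, Matrix.det_fromBlocks_zero₂₁, Matrix.det_one,
      one_mul, Matrix.det_fin_two]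
    simp [herp, herq]
  have hsingle : ∀ j0 : Fin (n + 2), A.mulVec (fun k => B k j0) = Pi.single j0 A.det := by
    intro j0
    funext i
    have h := congrFun (congrFun (Matrix.mul_adjugate A) i) j0
    rw [Matrix.mul_apply] at h
    simp only [Matrix.mulVec, dotProduct]
    rw [h]
    simp [Matrix.one_apply, Pi.single_apply, eq_comm]
  have hAQ : A * Q = (A.updateCol p (Pi.single p A.det)).updateCol q
      (Pi.single q A.det) := by
    rw [hQ, jac_mul_updateCol, jac_mul_updateCol, Matrix.mul_one, hsingle, hsingle]
  have hAcol : ∀ (i : Fin (n + 2)) (x : Fin (n + 2)), (x = p ∨ x = q) →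
      ((A.updateCol p (Pi.single p A.det)).updateCol q (Pi.single q A.det)) i x =
        (Pi.single x A.det : Fin (n + 2) → R) i := by
    rintro i x (rfl | rfl)
    · rw [Matrix.updateCol_ne hpq, Matrix.updateCol_self]
    · rw [Matrix.updateCol_self]
  have hAQsub : (A * Q).submatrix e e =
      Matrix.fromBlocks (A.submatrix (fun i => e (Sum.inl i)) (fun j => e (Sum.inl j))) 0
        (A.submatrix (fun i => e (Sum.inr i)) (fun j => e (Sum.inl j)))
        (A.det • (1 : Matrix (Fin 2) (Fin 2) R)) := by
    rw [hAQ]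
    ext i j
    rcases i with i | i <;> rcases j with j | j <;>
      simp only [Matrix.submatrix_apply, Matrix.fromBlocks_apply₁₁, Matrix.fromBlocks_apply₁₂,
        Matrix.fromBlocks_apply₂₁, Matrix.fromBlocks_apply₂₂, Matrix.zero_apply]
    · have h1 : e (Sum.inl j) ≠ q := by simp [he, hq, Fin.ext_iff, Fin.last]; omega
      have h2 : e (Sum.inl j) ≠ p := by simp [he, hp, Fin.ext_iff]; omega
      rw [Matrix.updateCol_ne h1, Matrix.updateCol_ne h2]
    · rw [hAcol _ _ (her j)]
      have hne : e (Sum.inl i) ≠ e (Sum.inr j) := by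
        simp only [ne_eq, EmbeddingLike.apply_eq_iff_eq]
        exact fun h => by cases h
      rw [Pi.single_apply, if_neg hne]
    · have h1 : e (Sum.inl j) ≠ q := by simp [he, hq, Fin.ext_iff, Fin.last]; omega
      have h2 : e (Sum.inl j) ≠ p := by simp [he, hp, Fin.ext_iff]; omega
      rw [Matrix.updateCol_ne h1, Matrix.updateCol_ne h2]
    · rw [hAcol _ _ (her j)]
      simp only [Pi.single_apply, EmbeddingLike.apply_eq_iff_eq, Sum.inr.injEq,
        Matrix.smul_apply, Matrix.one_apply, smul_eq_mul]
      by_cases h : i = j <;> simp [h, eq_comm]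
  have hdetAQ : (A * Q).det =
      (A.submatrix (fun i => e (Sum.inl i)) (fun j => e (Sum.inl j))).det *
        (A.det * A.det) := by
    rw [← Matrix.det_submatrix_equiv_self e, hAQsub, Matrix.det_fromBlocks_zero₁₂,
      Matrix.det_smul, Matrix.det_one]
    simp [Fintype.card_fin]
    ring
  have hfin : A.det * Q.det = (A * Q).det := (Matrix.det_mul A Q).symm
  rw [hdetQ] at hfin
  rw [hfin, hdetAQ]
  ring

private lemma jac_main (n : ℕ) (A : Matrix (Fin (n + 2)) (Fin (n + 2)) R) :
    (A.submatrix (Fin.succAbove ⟨n, by linarith⟩) (Fin.succAbove ⟨n, by linarith⟩)).det *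
        (A.submatrix Fin.castSucc Fin.castSucc).det -
      (A.submatrix (Fin.succAbove ⟨n, by linarith⟩) Fin.castSucc).det *
        (A.submatrix Fin.castSucc (Fin.succAbove ⟨n, by linarith⟩)).det =
      (A.submatrix (fun i : Fin n => i.castSucc.castSucc)
          (fun i : Fin n => i.castSucc.castSucc)).det * A.det := by
  let A' := Matrix.mvPolynomialX (Fin (n + 2)) (Fin (n + 2)) ℤ
  have hgen :
      (A'.submatrix (Fin.succAbove ⟨n, by linarith⟩) (Fin.succAbove ⟨n, by linarith⟩)).det *
          (A'.submatrix Fin.castSucc Fin.castSucc).det -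
        (A'.submatrix (Fin.succAbove ⟨n, by linarith⟩) Fin.castSucc).det *
          (A'.submatrix Fin.castSucc (Fin.succAbove ⟨n, by linarith⟩)).det =
        (A'.submatrix (fun i : Fin n => i.castSucc.castSucc)
            (fun i : Fin n => i.castSucc.castSucc)).det * A'.det :=
    mul_left_cancel₀ (Matrix.det_mvPolynomialX_ne_zero _ ℤ) (jac_key n A')
  let f : MvPolynomial (Fin (n + 2) × Fin (n + 2)) ℤ →+* R :=
    (MvPolynomial.eval₂Hom (Int.castRingHom R) fun pr => A pr.1 pr.2)
  have hmap : A'.map f = A := by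
    ext i j
    simp [A', f]
  calc _ = f ((A'.submatrix (Fin.succAbove ⟨n, by linarith⟩) (Fin.succAbove ⟨n, by linarith⟩)).det *
          (A'.submatrix Fin.castSucc Fin.castSucc).det -
        (A'.submatrix (Fin.succAbove ⟨n, by linarith⟩) Fin.castSucc).det *
          (A'.submatrix Fin.castSucc (Fin.succAbove ⟨n, by linarith⟩)).det) := by
        rw [← hmap]
        simp only [Matrix.submatrix_map, map_sub, _root_.map_mul, RingHom.map_det,
          RingHom.mapMatrix_apply]
    _ = f ((A'.submatrix (fun i : Fin n => i.castSucc.castSucc)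
            (fun i : Fin n => i.castSucc.castSucc)).det * A'.det) := by rw [hgen]
    _ = _ := by
        rw [← hmap]
        simp only [Matrix.submatrix_map, _root_.map_mul, RingHom.map_det,
          RingHom.mapMatrix_apply]

end JacobiAux

/-- Jacobi's bilinear determinant identity (Desnanot–Jacobi / Dodgson condensation):
for an `(n+2)×(n+2)` matrix `A` over a commutative ring (so the last two rows/columns are
indexed `n` and `n+1`, i.e. the statement's rows `n−1` and `n` in 1-based numbering):
`D[n−1;n−1]·D[n;n] − D[n−1;n]·D[n;n−1] = D[n−1,n;n−1,n]·D`,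
where `D[j;k]` deletes row `j` and column `k`. -/
theorem stmt8 {R : Type*} [CommRing R] (n : ℕ) (A : Matrix (Fin (n + 2)) (Fin (n + 2)) R) :
    (A.submatrix (Fin.succAbove ⟨n, by omega⟩) (Fin.succAbove ⟨n, by omega⟩)).det *
        (A.submatrix Fin.castSucc Fin.castSucc).det -
      (A.submatrix (Fin.succAbove ⟨n, by omega⟩) Fin.castSucc).det *
        (A.submatrix Fin.castSucc (Fin.succAbove ⟨n, by omega⟩)).det =
      (A.submatrix (fun i : Fin n => i.castSucc.castSucc)
          (fun i : Fin n => i.castSucc.castSucc)).det * A.det := by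
  exact jac_main n A
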